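/- In any double algebra, the elements of $B$ and $T$ commute in the horizontal algebra: for all $a, b \in A$, $\Phi_B(a)\star\Phi_T(b) = \Phi_T(b)\star\Phi_B(a)$. -/
import Mathlib


/-- A double algebra over a commutative ring `k`: a `k`-module `A` with two
associative unital bilinear multiplications, the vertical `vmul` (written `∘` in the
paper, unit `e`) and the horizontal `hmul` (written `⋆`, unit `i`), satisfying
axioms A1–A8 of Szlachányi's Definition 1.1. -/
structure DoubleAlgebra (k : Type*) (A : Type*) [CommRing k] [AddCommGroup A]
    [Module k A] where
  vmul : A →ₗ[k] A →ₗ[k] A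
  hmul : A →ₗ[k] A →ₗ[k] A
  e : A
  i : A
  vmul_assoc : ∀ a b c, vmul (vmul a b) c = vmul a (vmul b c)
  hmul_assoc : ∀ a b c, hmul (hmul a b) c = hmul a (hmul b c)
  vmul_e : ∀ a, vmul a e = a
  e_vmul : ∀ a, vmul e a = a
  hmul_i : ∀ a, hmul a i = a
  i_hmul : ∀ a, hmul i a = a
  A1 : ∀ a b, vmul (hmul a e) b = hmul (vmul (hmul a e) i) b
  A2 : ∀ a b, vmul a (hmul b e) = hmul (vmul i (hmul b e)) a
  A3 : ∀ a b, hmul (vmul a i) b = vmul (hmul (vmul a i) e) b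
  A4 : ∀ a b, hmul a (vmul b i) = vmul (hmul e (vmul b i)) a
  A5 : ∀ a b, vmul a (hmul e b) = hmul a (vmul i (hmul e b))
  A6 : ∀ a b, vmul (hmul e a) b = hmul b (vmul (hmul e a) i)
  A7 : ∀ a b, hmul a (vmul i b) = vmul a (hmul e (vmul i b))
  A8 : ∀ a b, hmul (vmul i a) b = vmul b (hmul (vmul i a) e)

variable {k A : Type*} [CommRing k] [AddCommGroup A] [Module k A]

/-- `Φ_L(a) = a ⋆ e`. -/
def DoubleAlgebra.PhiL (D : DoubleAlgebra k A) (a : A) : A := D.hmul a D.e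
/-- `Φ_R(a) = e ⋆ a`. -/
def DoubleAlgebra.PhiR (D : DoubleAlgebra k A) (a : A) : A := D.hmul D.e a
/-- `Φ_B(a) = a ∘ i`. -/
def DoubleAlgebra.PhiB (D : DoubleAlgebra k A) (a : A) : A := D.vmul a D.i
/-- `Φ_T(a) = i ∘ a`. -/
def DoubleAlgebra.PhiT (D : DoubleAlgebra k A) (a : A) : A := D.vmul D.i a

/-- elements of `B` and `T` commute in the horizontal algebra. -/
theorem stmt6 (D : DoubleAlgebra k A) (a b : A) :
    D.hmul (D.PhiB a) (D.PhiT b) = D.hmul (D.PhiT b) (D.PhiB a) := by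
  simp only [DoubleAlgebra.PhiB, DoubleAlgebra.PhiT]
  rw [D.A3, D.A4, ← D.vmul_assoc, ← D.vmul_assoc, ← D.A3, ← D.A4, D.hmul_i, D.i_hmul]
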